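/- Let U(p) = exp(−i m σx) · exp(−i p σz) for real parameters m, p. Then U(p) is unitary and its eigenvalues have the form e^{−iE} with cos E = cos(m) cos(p). -/

import Mathlib

open Matrix Complex

noncomputable def pauliX : Matrix (Fin 2) (Fin 2) ℂ := !![0, 1; 1, 0]
noncomputable def pauliZ : Matrix (Fin 2) (Fin 2) ℂ := !![1, 0; 0, -1]

noncomputable def diracWalkU (m p : ℝ) : Matrix (Fin 2) (Fin 2) ℂ :=
  NormedSpace.exp ((-Complex.I * m) • pauliX) * NormedSpace.exp ((-Complex.I * p) • pauliZ)

lemma diag2 (a b : ℂ) : Matrix.diagonal ![a, b] = !![a, 0; 0, b] := by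
  ext i j
  fin_cases i <;> fin_cases j <;> simp [Matrix.diagonal]

lemma expPi (a b : ℂ) : NormedSpace.exp ![a, b] = ![Complex.exp a, Complex.exp b] := by
  funext i
  fin_cases i <;> simp [← Complex.exp_eq_exp_ℂ]

lemma expZ_eq (p : ℝ) :
    NormedSpace.exp ((-Complex.I * p) • pauliZ) =
      !![Complex.exp (-(Complex.I * p)), 0; 0, Complex.exp (Complex.I * p)] := by
  have h : ((-Complex.I * p) • pauliZ)
      = Matrix.diagonal ![-(Complex.I * p), Complex.I * p] := by
    rw [diag2]
    ext i j
    fin_cases i <;> fin_cases j <;> simp [pauliZ] <;> ring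
  rw [h, Matrix.exp_diagonal, expPi, diag2]

lemma hcos_aux (m : ℝ) :
    Complex.exp (-(Complex.I * m)) + Complex.exp (Complex.I * m)
      = 2 * (Real.cos m : ℂ) := by
  rw [Complex.ofReal_cos, Complex.cos,
    show -(Complex.I * (m : ℂ)) = -(m : ℂ) * Complex.I by ring,
    show (Complex.I * (m : ℂ)) = (m : ℂ) * Complex.I by ring]
  ring

lemma hsin_aux (m : ℝ) :
    Complex.exp (-(Complex.I * m)) - Complex.exp (Complex.I * m)
      = -(2 * Complex.I * (Real.sin m : ℂ)) := by
  rw [Complex.ofReal_sin, Complex.sin,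
    show (-(m : ℂ) * Complex.I) = -(Complex.I * (m : ℂ)) by ring,
    show ((m : ℂ) * Complex.I) = Complex.I * (m : ℂ) by ring]
  linear_combination (Complex.exp (-(Complex.I * (m:ℂ))) - Complex.exp (Complex.I * m))
    * Complex.I_sq

lemma expX_eq (m : ℝ) :
    NormedSpace.exp ((-Complex.I * m) • pauliX) =
      !![(Real.cos m : ℂ), -(Complex.I * Real.sin m);
         -(Complex.I * Real.sin m), (Real.cos m : ℂ)] := by
  set P : Matrix (Fin 2) (Fin 2) ℂ := !![1, 1; 1, -1] with hP
  have hPinv : P⁻¹ = (2⁻¹ : ℂ) • P := by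
    apply Matrix.inv_eq_right_inv
    rw [hP, Matrix.one_fin_two]
    ext i j
    fin_cases i <;> fin_cases j <;>
      simp [Matrix.mul_apply, Fin.sum_univ_two] <;> norm_num
  have hPunit : IsUnit P := by
    rw [Matrix.isUnit_iff_isUnit_det]
    simp [hP, Matrix.det_fin_two_of]
    norm_num
  have hconj : ((-Complex.I * m) • pauliX)
      = P * Matrix.diagonal ![-(Complex.I * m), Complex.I * m] * P⁻¹ := by
    rw [hPinv, diag2, hP]
    ext i j
    fin_cases i <;> fin_cases j <;>
      simp [pauliX, Matrix.mul_apply, Fin.sum_univ_two] <;> ring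
  rw [hconj, Matrix.exp_conj P _ hPunit, Matrix.exp_diagonal, expPi, diag2, hPinv, hP]
  have hc := hcos_aux m
  have hs := hsin_aux m
  ext i j
  fin_cases i <;> fin_cases j <;>
    simp [Matrix.mul_apply, Fin.sum_univ_two,
      -Complex.ofReal_cos, -Complex.ofReal_sin] <;>
    first
      | linear_combination (2⁻¹ : ℂ) * hc
      | linear_combination (2⁻¹ : ℂ) * hs

lemma diracWalkU_eq (m p : ℝ) :
    diracWalkU m p =
      !![(Real.cos m : ℂ) * Complex.exp (-(Complex.I * p)),
          -(Complex.I * Real.sin m) * Complex.exp (Complex.I * p);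
         -(Complex.I * Real.sin m) * Complex.exp (-(Complex.I * p)),
          (Real.cos m : ℂ) * Complex.exp (Complex.I * p)] := by
  rw [diracWalkU, expX_eq, expZ_eq]
  ext i j
  fin_cases i <;> fin_cases j <;>
    simp [Matrix.mul_apply, Fin.sum_univ_two,
      -Complex.ofReal_cos, -Complex.ofReal_sin] <;>
    ring

theorem diracWalkU_unitary_and_eigenvalues (m p : ℝ) :
    (diracWalkU m p) * (diracWalkU m p)ᴴ = 1 ∧
    ∀ lam : ℂ, (∃ v : Fin 2 → ℂ, v ≠ 0 ∧ (diracWalkU m p).mulVec v = lam • v) →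
      ∃ E : ℝ, lam = Complex.exp (-Complex.I * E) ∧ Real.cos E = Real.cos m * Real.cos p := by
  have hU := diracWalkU_eq m p
  have hexp1 : Complex.exp (Complex.I * p) * Complex.exp (-(Complex.I * p)) = 1 := by
    rw [← Complex.exp_add]
    ring_nf
    exact Complex.exp_zero
  have hexp2 := hcos_aux p
  have hS : ((Real.cos m : ℂ))^2 + ((Real.sin m : ℂ))^2 = 1 := by
    exact_mod_cast congrArg (Complex.ofReal) (Real.cos_sq_add_sin_sq m)
  constructor
  · rw [hU, Matrix.one_fin_two]
    ext i j
    fin_cases i <;> fin_cases j <;>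
      simp [Matrix.mul_apply, Fin.sum_univ_two, Matrix.conjTranspose_apply,
        ← Complex.exp_conj, _root_.map_mul, map_neg, Complex.conj_ofReal,
        Complex.conj_I, -Complex.ofReal_cos, -Complex.ofReal_sin] <;>
      first
        | ring1
        | linear_combination ((Real.cos m : ℂ)^2 + (Real.sin m : ℂ)^2) * hexp1 + hS
            - Complex.exp (-(Complex.I * p)) * Complex.exp (Complex.I * p)
              * (Real.sin m : ℂ)^2 * Complex.I_sq
  · rintro lam ⟨v, hv, hvec⟩
    have hdet : ((diracWalkU m p) - lam • (1 : Matrix (Fin 2) (Fin 2) ℂ)).det = 0 := by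
      rw [← Matrix.exists_mulVec_eq_zero_iff]
      refine ⟨v, hv, ?_⟩
      rw [Matrix.sub_mulVec, hvec, Matrix.smul_mulVec, Matrix.one_mulVec, sub_self]
    rw [hU] at hdet
    simp [Matrix.det_fin_two, Matrix.sub_apply, Matrix.smul_apply, Matrix.one_apply,
      -Complex.ofReal_cos, -Complex.ofReal_sin] at hdet
    set c : ℝ := Real.cos m * Real.cos p with hc
    have hc1 : -1 ≤ c := by
      nlinarith [Real.neg_one_le_cos m, Real.cos_le_one m,
        Real.neg_one_le_cos p, Real.cos_le_one p]
    have hc2 : c ≤ 1 := by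
      nlinarith [Real.neg_one_le_cos m, Real.cos_le_one m,
        Real.neg_one_le_cos p, Real.cos_le_one p]
    set α := Real.arccos c with hα
    have hcos : Real.cos α = c := Real.cos_arccos hc1 hc2
    have hαexp : Complex.exp (Complex.I * α) + Complex.exp (-(Complex.I * α))
        = 2 * (c : ℂ) := by
      have := hcos_aux α
      rw [hcos] at this
      linear_combination this
    have hαexp1 : Complex.exp (Complex.I * α) * Complex.exp (-(Complex.I * α)) = 1 := by
      rw [← Complex.exp_add]
      ring_nf
      exact Complex.exp_zero
    have hq : lam ^ 2 - 2 * (c : ℂ) * lam + 1 = 0 := by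
      rw [hc, Complex.ofReal_mul]
      linear_combination hdet + (Real.cos m : ℂ) * lam * hexp2
        + (Real.sin m : ℂ)^2 * Complex.exp (Complex.I * p) * Complex.exp (-(Complex.I * p))
          * Complex.I_sq
        - ((Real.cos m : ℂ)^2 + (Real.sin m : ℂ)^2) * hexp1 - hS
    have hquad : (lam - Complex.exp (Complex.I * α)) * (lam - Complex.exp (-(Complex.I * α)))
        = 0 := by
      linear_combination hq - lam * hαexp + hαexp1
    rcases mul_eq_zero.mp hquad with h | h
    · refine ⟨-α, ?_, by rw [Real.cos_neg, hcos]⟩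
      rw [sub_eq_zero] at h
      rw [h]
      congr 1
      push_cast
      ring
    · refine ⟨α, ?_, by rw [hcos]⟩
      rw [sub_eq_zero] at h
      rw [h]
      congr 1
      ring
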